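/- For all real parameters v and c, the point P₂ = (0, 1/2, 1/2) is an equilibrium of the reduced replicator vector field, i.e. F_{v,c}(0, 1/2, 1/2) = (0,0,0), and the characteristic polynomial of the Jacobian matrix J(0, 1/2, 1/2) equals (X − c/8)·(X − (c−2v)/8)·(X − (2v−c)/8). -/

import Mathlib

open Polynomial

noncomputable section

/-- The reduced replicator vector field of the asymmetric Hawk-Dove game. -/
def F (v c : ℝ) (p : Fin 3 → ℝ) : Fin 3 → ℝ :=
  ![ (1/4) * p 0 * (c * (2*(p 0)^2 + 2*(p 0)*(p 1 + p 2 - 1) + 2*(p 1)*(p 2) - p 1 - p 2)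
        - v * (2*(p 0) + p 1 + p 2 - 2)),
     -(1/4) * p 1 * (v * (2*(p 0) + p 1 + p 2 - 1) - c * (2*(p 0) + 2*(p 1) - 1) * (p 0 + p 2)),
     -(1/4) * p 2 * (v * (2*(p 0) + p 1 + p 2 - 1) - c * (p 0 + p 1) * (2*(p 0) + 2*(p 2) - 1)) ]

/-- The Jacobian matrix of `F v c` at `p`: the matrix of the Fréchet derivative
with respect to the standard basis. -/
def J (v c : ℝ) (p : Fin 3 → ℝ) : Matrix (Fin 3) (Fin 3) ℝ :=
  Matrix.of fun i j => fderiv ℝ (F v c) p (Pi.single j 1) i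

set_option maxHeartbeats 1000000 in
theorem equilibrium_P2_charpoly (v c : ℝ) :
    F v c ![0, 1/2, 1/2] = 0 ∧
    (J v c ![0, 1/2, 1/2]).charpoly
      = (X - C (c/8)) * (X - C ((c - 2*v)/8)) * (X - C ((2*v - c)/8)) := by
  constructor
  · funext i
    fin_cases i <;> simp [F] <;> norm_num
  · set P : Fin 3 → ℝ := ![0, 1/2, 1/2] with hP
    have e0 := hasFDerivAt_apply (𝕜 := ℝ) (0 : Fin 3) P
    have e1 := hasFDerivAt_apply (𝕜 := ℝ) (1 : Fin 3) P
    have e2 := hasFDerivAt_apply (𝕜 := ℝ) (2 : Fin 3) P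
    have h1 := (e0.const_mul ((1:ℝ)/4)).mul
      ((((((((e0.mul e0).const_mul 2).add ((e0.const_mul 2).mul ((e1.add e2).sub_const 1))).add
        ((e1.const_mul 2).mul e2)).sub e1).sub e2).const_mul c).sub
        (((((e0.const_mul 2).add e1).add e2).sub_const 2).const_mul v))
    have h2 := (e1.const_mul (-(1:ℝ)/4)).mul
      ((((((e0.const_mul 2).add e1).add e2).sub_const 1).const_mul v).sub
        ((((((e0.const_mul 2).add (e1.const_mul 2)).sub_const 1)).const_mul c).mul (e0.add e2)))
    have h3 := (e2.const_mul (-(1:ℝ)/4)).mul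
      ((((((e0.const_mul 2).add e1).add e2).sub_const 1).const_mul v).sub
        (((e0.add e1).const_mul c).mul (((e0.const_mul 2).add (e2.const_mul 2)).sub_const 1)))
    have t1 : HasFDerivAt (fun q : Fin 3 → ℝ => F v c q 0) _ P :=
      h1.congr_of_eventuallyEq (.of_forall fun q => by simp only [F, Matrix.cons_val_zero, Matrix.cons_val_one, Matrix.head_cons, Matrix.cons_val_two, Matrix.tail_cons, Pi.mul_apply, Pi.add_apply, Pi.sub_apply]; ring)
    have t2 : HasFDerivAt (fun q : Fin 3 → ℝ => F v c q 1) _ P :=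
      h2.congr_of_eventuallyEq (.of_forall fun q => by simp only [F, Matrix.cons_val_zero, Matrix.cons_val_one, Matrix.head_cons, Matrix.cons_val_two, Matrix.tail_cons, Pi.mul_apply, Pi.add_apply, Pi.sub_apply]; ring)
    have t3 : HasFDerivAt (fun q : Fin 3 → ℝ => F v c q 2) _ P :=
      h3.congr_of_eventuallyEq (.of_forall fun q => by simp only [F, Matrix.cons_val_zero, Matrix.cons_val_one, Matrix.head_cons, Matrix.cons_val_two, Matrix.tail_cons, Pi.mul_apply, Pi.add_apply, Pi.sub_apply]; ring)
    have hdF : DifferentiableAt ℝ (F v c) P := by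
      rw [differentiableAt_pi]
      intro i
      fin_cases i
      exacts [t1.differentiableAt, t2.differentiableAt, t3.differentiableAt]
    have u1 := ((hasFDerivAt_pi'.1 hdF.hasFDerivAt 0).unique t1)
    have u2 := ((hasFDerivAt_pi'.1 hdF.hasFDerivAt 1).unique t2)
    have u3 := ((hasFDerivAt_pi'.1 hdF.hasFDerivAt 2).unique t3)
    have a1 : ∀ u : Fin 3 → ℝ, fderiv ℝ (F v c) P u 0 = _ :=
      fun u => congrFun (congrArg DFunLike.coe u1) u
    have a2 : ∀ u : Fin 3 → ℝ, fderiv ℝ (F v c) P u 1 = _ :=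
      fun u => congrFun (congrArg DFunLike.coe u2) u
    have a3 : ∀ u : Fin 3 → ℝ, fderiv ℝ (F v c) P u 2 = _ :=
      fun u => congrFun (congrArg DFunLike.coe u3) u
    have hJ : J v c P = Matrix.of ![![(2*v - c)/8, 0, 0],
        ![(c - 2*v)/8, (c - v)/8, -v/8], ![(c - 2*v)/8, -v/8, (c - v)/8]] := by
      ext i j
      fin_cases i <;> fin_cases j
      case _ => refine ((a1 _).trans ?_); simp [hP, Pi.single_apply, Matrix.vecHead, Matrix.vecTail]; try ring
      case _ => refine ((a1 _).trans ?_); simp [hP, Pi.single_apply, Matrix.vecHead, Matrix.vecTail]; try ring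
      case _ => refine ((a1 _).trans ?_); simp [hP, Pi.single_apply, Matrix.vecHead, Matrix.vecTail]; try ring
      case _ => refine ((a2 _).trans ?_); simp [hP, Pi.single_apply, Matrix.vecHead, Matrix.vecTail]; try ring
      case _ => refine ((a2 _).trans ?_); simp [hP, Pi.single_apply, Matrix.vecHead, Matrix.vecTail]; try ring
      case _ => refine ((a2 _).trans ?_); simp [hP, Pi.single_apply, Matrix.vecHead, Matrix.vecTail]; try ring
      case _ => refine ((a3 _).trans ?_); simp [hP, Pi.single_apply, Matrix.vecHead, Matrix.vecTail]; try ring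
      case _ => refine ((a3 _).trans ?_); simp [hP, Pi.single_apply, Matrix.vecHead, Matrix.vecTail]; try ring
      case _ => refine ((a3 _).trans ?_); simp [hP, Pi.single_apply, Matrix.vecHead, Matrix.vecTail]; try ring
    rw [hJ]
    rw [Matrix.charpoly]
    rw [Matrix.det_fin_three]
    simp [Matrix.charmatrix_apply_eq, Matrix.charmatrix_apply_ne, Matrix.of_apply]
    simp only [div_eq_mul_inv, map_mul, map_add, map_sub, map_neg, map_ofNat, map_one, map_inv₀]
    ring
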